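/- Assume λ > L_f. For any h ∈ (0, 1/λ], the equation v(x) = inf_{u ∈ U_h(x)} { (1−λh)·v(x + h·f(x,u)) + h·ℓ(x,u) }, x ∈ closure(Ω), has a unique bounded solution v_h, and v_h satisfies ‖v_h‖_∞ ≤ M_ℓ/λ. -/

import Mathlib

open Set BoundedContinuousFunction

def Disc (α : Type*) : Type _ := α

def Disc.mk {α : Type*} (a : α) : Disc α := a

instance {α : Type*} : TopologicalSpace (Disc α) := ⊥
instance {α : Type*} : DiscreteTopology (Disc α) := ⟨rfl⟩

lemma abs_sInf_image_sub_le {ι : Type*} {A : Set ι} (hA : A.Nonempty) (p q : ι → ℝ)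
    (hbp : BddBelow (p '' A)) (hbq : BddBelow (q '' A)) {δ : ℝ}
    (hδ : ∀ a ∈ A, |p a - q a| ≤ δ) : |sInf (p '' A) - sInf (q '' A)| ≤ δ := by
  rw [abs_sub_le_iff]
  constructor
  · have : sInf (p '' A) - δ ≤ sInf (q '' A) := by
      refine le_csInf (hA.image q) ?_
      rintro b ⟨a, ha, rfl⟩
      have h1 : sInf (p '' A) ≤ p a := csInf_le hbp ⟨a, ha, rfl⟩
      have h2 := (abs_le.1 (hδ a ha)).2
      linarith
    linarith
  · have : sInf (q '' A) - δ ≤ sInf (p '' A) := by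
      refine le_csInf (hA.image p) ?_
      rintro b ⟨a, ha, rfl⟩
      have h1 : sInf (q '' A) ≤ q a := csInf_le hbq ⟨a, ha, rfl⟩
      have h2 := (abs_le.1 (hδ a ha)).1
      linarith
    linarith

theorem stmt9 {d m : ℕ} (Ω : Set (EuclideanSpace ℝ (Fin d)))
    (hΩo : IsOpen Ω) (hΩb : Bornology.IsBounded Ω) (hΩc : Convex ℝ Ω)
    (U : Set (Fin m → ℝ)) (hU : IsCompact U)
    (f : EuclideanSpace ℝ (Fin d) → (Fin m → ℝ) → EuclideanSpace ℝ (Fin d))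
    (ℓ : EuclideanSpace ℝ (Fin d) → (Fin m → ℝ) → ℝ)
    (hfc : ContinuousOn (fun p : EuclideanSpace ℝ (Fin d) × (Fin m → ℝ) => f p.1 p.2)
      (closure Ω ×ˢ U))
    (hℓc : ContinuousOn (fun p : EuclideanSpace ℝ (Fin d) × (Fin m → ℝ) => ℓ p.1 p.2)
      (closure Ω ×ˢ U))
    (Lf Lℓ Mf Mℓ : ℝ)
    (hfL : ∀ u ∈ U, ∀ x y, ‖f x u - f y u‖ ≤ Lf * ‖x - y‖)
    (hℓL : ∀ u ∈ U, ∀ x y, |ℓ x u - ℓ y u| ≤ Lℓ * ‖x - y‖)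
    (hfM : ∀ u ∈ U, ∀ x, ‖f x u‖ ≤ Mf)
    (hℓM : ∀ u ∈ U, ∀ x, |ℓ x u| ≤ Mℓ)
    (lam : ℝ) (hlam : Lf < lam) (hlam0 : 0 < lam)
    (h : ℝ) (hh : 0 < h) (hhl : h ≤ 1 / lam)
    (hne : ∀ x ∈ closure Ω, ∃ u ∈ U, x + h • f x u ∈ Ω) :
    ∃ vh : EuclideanSpace ℝ (Fin d) → ℝ,
      (∀ x ∈ closure Ω, |vh x| ≤ Mℓ / lam) ∧
      (∀ x ∈ closure Ω, vh x =
        sInf ((fun a => (1 - lam * h) * vh (x + h • f x a) + h * ℓ x a) ''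
          {a ∈ U | x + h • f x a ∈ Ω})) ∧
      (∀ w : EuclideanSpace ℝ (Fin d) → ℝ, (∃ M, ∀ x ∈ closure Ω, |w x| ≤ M) →
        (∀ x ∈ closure Ω, w x =
          sInf ((fun a => (1 - lam * h) * w (x + h • f x a) + h * ℓ x a) ''
            {a ∈ U | x + h • f x a ∈ Ω})) →
        ∀ x ∈ closure Ω, w x = vh x) := by
  classical
  rcases (closure Ω).eq_empty_or_nonempty with hSe | ⟨x₀, hx₀⟩
  · refine ⟨fun _ => 0, ?_, ?_, ?_⟩
    · intro x hx; rw [hSe] at hx; exact absurd hx (Set.notMem_empty x)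
    · intro x hx; rw [hSe] at hx; exact absurd hx (Set.notMem_empty x)
    · intro w _ _ x hx; rw [hSe] at hx; exact absurd hx (Set.notMem_empty x)
  obtain ⟨u₀, hu₀, -⟩ := hne x₀ hx₀
  have hMℓ0 : 0 ≤ Mℓ := (abs_nonneg _).trans (hℓM u₀ hu₀ x₀)
  have hK0 : 0 ≤ 1 - lam * h := by
    have : lam * h ≤ lam * (1 / lam) := by nlinarith
    rw [mul_one_div, div_self hlam0.ne'] at this
    linarith
  have hK1 : 1 - lam * h < 1 := by nlinarith
  have hΩS : Ω ⊆ closure Ω := subset_closure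
  set A : EuclideanSpace ℝ (Fin d) → Set (Fin m → ℝ) :=
    fun x => {a ∈ U | x + h • f x a ∈ Ω} with hA
  set g : (Disc (EuclideanSpace ℝ (Fin d)) →ᵇ ℝ) → EuclideanSpace ℝ (Fin d) → (Fin m → ℝ) → ℝ :=
    fun v x a => (1 - lam * h) * v (x + h • f x a) + h * ℓ x a with hg
  set T : (Disc (EuclideanSpace ℝ (Fin d)) →ᵇ ℝ) → EuclideanSpace ℝ (Fin d) → ℝ :=
    fun v x => if x ∈ closure Ω then sInf (g v x '' A x) else 0 with hT
  have hAne : ∀ x ∈ closure Ω, (A x).Nonempty := fun x hx => by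
    obtain ⟨u, hu, hu2⟩ := hne x hx; exact ⟨u, hu, hu2⟩
  have hbddg : ∀ (v : Disc (EuclideanSpace ℝ (Fin d)) →ᵇ ℝ) x, ∀ a ∈ A x,
      |g v x a| ≤ (1 - lam * h) * ‖v‖ + h * Mℓ := by
    intro v x a ha
    have h1 : |(v (x + h • f x a) : ℝ)| ≤ ‖v‖ := v.norm_coe_le_norm _
    have h2 : |ℓ x a| ≤ Mℓ := hℓM a ha.1 x
    obtain ⟨h1a, h1b⟩ := abs_le.1 h1
    obtain ⟨h2a, h2b⟩ := abs_le.1 h2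
    simp only [hg]
    rw [abs_le]
    constructor <;> nlinarith
  have hbdd : ∀ (v : Disc (EuclideanSpace ℝ (Fin d)) →ᵇ ℝ) x, BddBelow (g v x '' A x) := by
    intro v x
    refine ⟨-((1 - lam * h) * ‖v‖ + h * Mℓ), ?_⟩
    rintro b ⟨a, ha, rfl⟩
    exact neg_le_of_abs_le (hbddg v x a ha)
  have hTb : ∀ (v : Disc (EuclideanSpace ℝ (Fin d)) →ᵇ ℝ) (x : EuclideanSpace ℝ (Fin d)),
      ‖T v x‖ ≤ (1 - lam * h) * ‖v‖ + h * Mℓ := by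
    intro v x
    by_cases hx : x ∈ closure Ω
    · rw [hT]
      simp only [if_pos hx]
      have hne' := hAne x hx
      rw [Real.norm_eq_abs, abs_le]
      constructor
      · refine le_csInf (hne'.image _) ?_
        rintro b ⟨a, ha, rfl⟩
        exact neg_le_of_abs_le (hbddg v x a ha)
      · obtain ⟨a, ha⟩ := hne'
        calc sInf (g v x '' A x) ≤ g v x a := csInf_le (hbdd v x) ⟨a, ha, rfl⟩
          _ ≤ _ := (abs_le.1 (hbddg v x a ha)).2
    · rw [hT]
      simp only [if_neg hx, norm_zero]
      positivity
  set F : (Disc (EuclideanSpace ℝ (Fin d)) →ᵇ ℝ) → (Disc (EuclideanSpace ℝ (Fin d)) →ᵇ ℝ) :=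
    fun v =>
    BoundedContinuousFunction.ofNormedAddCommGroup
      (fun x : Disc (EuclideanSpace ℝ (Fin d)) => T v x)
      continuous_of_discreteTopology ((1 - lam * h) * ‖v‖ + h * Mℓ)
      (fun x => hTb v x) with hF
  have hFapp : ∀ (v : Disc (EuclideanSpace ℝ (Fin d)) →ᵇ ℝ) (x : EuclideanSpace ℝ (Fin d)),
      F v x = if x ∈ closure Ω then sInf (g v x '' A x) else 0 :=
    fun v x => rfl
  set K : NNReal := ⟨1 - lam * h, hK0⟩ with hKdef
  have hcontr : ContractingWith K F := by
    constructor
    · rw [← NNReal.coe_lt_coe, NNReal.coe_one]; exact hK1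
    · refine LipschitzWith.of_dist_le_mul fun v w => ?_
      have hK0' : (0 : ℝ) ≤ (K : ℝ) * dist v w := by positivity
      rw [BoundedContinuousFunction.dist_le hK0']
      have hpt : ∀ x : EuclideanSpace ℝ (Fin d),
          dist (F v x) (F w x) ≤ (K : ℝ) * dist v w := by
        intro x
        rw [hFapp, hFapp]
        by_cases hx : x ∈ closure Ω
        · rw [if_pos hx, if_pos hx, Real.dist_eq]
          have hKco : (K : ℝ) = 1 - lam * h := rfl
          rw [hKco]
          refine abs_sInf_image_sub_le (hAne x hx) _ _ (hbdd v x) (hbdd w x) ?_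
          intro a ha
          have heq : g v x a - g w x a
              = (1 - lam * h) * ((v (x + h • f x a) : ℝ) - w (x + h • f x a)) := by
            simp only [hg]; ring
          rw [heq, abs_mul, abs_of_nonneg hK0]
          have hd : |(v (x + h • f x a) : ℝ) - w (x + h • f x a)| ≤ dist v w := by
            rw [← Real.dist_eq]
            exact BoundedContinuousFunction.dist_coe_le_dist _
          exact mul_le_mul_of_nonneg_left hd hK0
        · rw [if_neg hx, if_neg hx, dist_self]
          exact hK0'
      intro x
      exact hpt x
  set v₀ : Disc (EuclideanSpace ℝ (Fin d)) →ᵇ ℝ := hcontr.fixedPoint F with hv₀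
  have hfix : F v₀ = v₀ := hcontr.fixedPoint_isFixedPt
  have hnorm : ‖v₀‖ ≤ Mℓ / lam := by
    have hb : ∀ x : Disc (EuclideanSpace ℝ (Fin d)),
        ‖v₀ x‖ ≤ (1 - lam * h) * ‖v₀‖ + h * Mℓ := by
      intro x
      conv_lhs => rw [← hfix]
      exact hTb v₀ x
    have h2 : ‖v₀‖ ≤ (1 - lam * h) * ‖v₀‖ + h * Mℓ := by
      rw [BoundedContinuousFunction.norm_le (by positivity)]
      exact hb
    have h3 : 0 ≤ ‖v₀‖ := norm_nonneg _
    rw [le_div_iff₀ hlam0]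
    nlinarith
  refine ⟨fun y => v₀ y, ?_, ?_, ?_⟩
  · intro x hx
    exact (v₀.norm_coe_le_norm x).trans hnorm
  · intro x hx
    show (v₀ x : ℝ) = _
    have := hFapp v₀ x
    rw [if_pos hx, hfix] at this
    rw [this]
  · intro w ⟨M, hM⟩ hweq x hx
    have hwb : ∀ y : EuclideanSpace ℝ (Fin d),
        ‖(if y ∈ closure Ω then w y else 0 : ℝ)‖ ≤ max M 0 := by
      intro y
      by_cases hy : y ∈ closure Ω
      · rw [if_pos hy, Real.norm_eq_abs]
        exact (hM y hy).trans (le_max_left _ _)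
      · rw [if_neg hy]; simp
    set w' : Disc (EuclideanSpace ℝ (Fin d)) →ᵇ ℝ :=
      BoundedContinuousFunction.ofNormedAddCommGroup
        (fun y : Disc (EuclideanSpace ℝ (Fin d)) =>
          if y ∈ closure Ω then w y else 0)
        continuous_of_discreteTopology (max M 0) (fun y => hwb y) with hw'
    have hw'app : ∀ y : EuclideanSpace ℝ (Fin d),
        (w' y : ℝ) = if y ∈ closure Ω then w y else 0 := fun y => rfl
    have hkey : ∀ y : EuclideanSpace ℝ (Fin d), F w' y = w' y := by
      intro y
      rw [hFapp, hw'app]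
      by_cases hy : y ∈ closure Ω
      · rw [if_pos hy, if_pos hy]
        have himg : g w' y '' A y =
            (fun a => (1 - lam * h) * w (y + h • f y a) + h * ℓ y a) '' A y := by
          refine Set.image_congr fun a ha => ?_
          have hz : y + h • f y a ∈ closure Ω := hΩS ha.2
          simp only [hg, hw'app, if_pos hz]
        rw [himg, hA, ← hweq y hy]
      · rw [if_neg hy, if_neg hy]
    have hfixw : Function.IsFixedPt F w' := by
      ext y
      exact hkey y
    have hwv : w' = v₀ := hcontr.fixedPoint_unique hfixw
    have hx' : (w' x : ℝ) = v₀ x := by rw [hwv]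
    rw [hw'app, if_pos hx] at hx'
    exact hx'
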